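/- Let φ ∈ C_b(𝒰) and, for ν ∈ M_1(𝒰), define ψ_ν : 𝒰 → ℝ by ψ_ν(n,x_1,…,x_n) = (Φ_n(ν)/(n+1)) Σ_{j=1}^{n+1} (φ(n+1,x_1,…,x_{j−1},0,x_j,…,x_n) − φ(n,x_1,…,x_n)) for 0 ≤ n ≤ C−1, and ψ_ν ≡ 0 on 𝒰_C. If t ↦ ν_t ∈ M_1(𝒰) is continuous for the weak topology, then the map t ↦ ⟨ν_t, ψ_{ν_t}⟩ is continuous on [0,∞). -/

import Mathlib

open MeasureTheory Filter Set
open scoped NNReal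

noncomputable section

/-- The server-state space `𝒰`: an occupancy `n : ℕ` together with the ages (in `[0,∞)`)
of the `n` jobs in service.  (Statements restrict attention to measures supported on
occupancies `n ≤ C`.) -/
abbrev SState : Type := Σ n : ℕ, (Fin n → ℝ≥0)

namespace MFModel

/-- The set `𝒰_n` of states with occupancy exactly `n`. -/
def level (n : ℕ) : Set SState := {u | u.1 = n}

/-- The empty state `0 ∈ 𝒰_0`. -/
def emptyState : SState := ⟨0, fun i => i.elim0⟩

/-- The state `(1,0)`: a single job of age `0`. -/
def oneZero : SState := ⟨1, fun _ => 0⟩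

/-- `ν` is a probability measure concentrated on `𝒰 = ⋃_{n ≤ C} 𝒰_n`. -/
def MemM1 (C : ℕ) (ν : Measure SState) : Prop :=
  IsProbabilityMeasure ν ∧ ν {u : SState | u.1 ≤ C} = 1

/-- `R̄_n(ν) = Σ_{m=n}^C ν(𝒰_m)` (so that `R̄_{C+1}(ν) = 0`). -/
def Rbar (C : ℕ) (ν : Measure SState) (n : ℕ) : ℝ :=
  ∑ m ∈ Finset.Icc n C, (ν (level m)).toReal

/-- `Φ_n(ν) = Σ_{k=0}^{d-1} R̄_n(ν)^k R̄_{n+1}(ν)^{d-1-k}`, the divided power difference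
`(R̄_n^d − R̄_{n+1}^d)/(R̄_n − R̄_{n+1})`. -/
def Phi (C d : ℕ) (ν : Measure SState) (n : ℕ) : ℝ :=
  ∑ k ∈ Finset.range d, (Rbar C ν n) ^ k * (Rbar C ν (n + 1)) ^ (d - 1 - k)

/-- The restriction of `ν` to the level `𝒰_n`, viewed as a measure on the ages. -/
def fiber (ν : Measure SState) (n : ℕ) : Measure (Fin n → ℝ≥0) :=
  Measure.comap (fun x : Fin n → ℝ≥0 => (⟨n, x⟩ : SState)) ν

/-- The restriction of `ν` to the level `𝒰_n`, as a measure on `[0,∞)^n ⊆ ℝ^n`. -/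
def fiberReal (ν : Measure SState) (n : ℕ) : Measure (Fin n → ℝ) :=
  Measure.map (fun (x : Fin n → ℝ≥0) (i : Fin n) => (x i : ℝ)) (fiber ν n)

/-- The pairing `⟨ν, φ⟩ = ∫_𝒰 φ dν`. -/
def pair (ν : Measure SState) (φ : SState → ℝ) : ℝ := ∫ u, φ u ∂ν

/-- The age shift `τ_y^+` on states (`y` a real number, truncated at `0`). -/
def shift (y : ℝ) (u : SState) : SState := ⟨u.1, fun i => u.2 i + Real.toNNReal y⟩

/-- `φ ∈ C_b(𝒰)`: bounded continuous. -/
def IsCb (φ : SState → ℝ) : Prop := Continuous φ ∧ ∃ M, ∀ u, |φ u| ≤ M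

/-- `φ ∈ C_b^1(𝒰)` with partial-derivative family `D`: `φ` is bounded continuous, and on
each level the partial derivatives (one-sided at the boundary of `[0,∞)`) exist, are
continuous and are bounded; `D n i x` is `∂φ(n,x)/∂x_i`. -/
def IsCb1 (φ : SState → ℝ) (D : (n : ℕ) → Fin n → (Fin n → ℝ≥0) → ℝ) : Prop :=
  IsCb φ ∧
  (∀ n (i : Fin n), Continuous (D n i)) ∧
  (∃ M, ∀ n (i : Fin n) x, |D n i x| ≤ M) ∧
  (∀ n (i : Fin n) (x : Fin n → ℝ≥0),
    HasDerivWithinAt (fun y : ℝ => φ ⟨n, Function.update x i (Real.toNNReal y)⟩)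
      (D n i x) (Set.Ici (0 : ℝ)) ((x i : ℝ)))

/-- `φ' = Σ_i ∂φ/∂x_i`, built from the partial-derivative family `D`. -/
def sumDeriv (D : (n : ℕ) → Fin n → (Fin n → ℝ≥0) → ℝ) (u : SState) : ℝ :=
  ∑ i : Fin u.1, D u.1 i u.2

/-- The drift functional `B[φ](ν)` of the mean-field model. -/
def drift (C d : ℕ) (lam : ℝ) (β : ℝ≥0 → ℝ) (φ : SState → ℝ) (ν : Measure SState) : ℝ :=
  (∑ n ∈ Finset.range C, ∑ j : Fin (n + 1),
    ∫ x : Fin (n + 1) → ℝ≥0,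
      β (x j) * (φ ⟨n, x ∘ j.succAbove⟩ - φ ⟨n + 1, x⟩) ∂(fiber ν (n + 1)))
  + lam * ((ν (level 0)).toReal * Phi C d ν 0 * (φ oneZero - φ emptyState)
      + ∑ n ∈ Finset.Icc 1 (C - 1), (Phi C d ν n / (n + 1)) *
          ∑ j : Fin (n + 1),
            ∫ x : Fin n → ℝ≥0, (φ ⟨n + 1, j.insertNth 0 x⟩ - φ ⟨n, x⟩) ∂(fiber ν n))

/-- Weak continuity of a path of measures on `[0,∞)`. -/
def WeaklyContinuous (ν : ℝ → Measure SState) : Prop :=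
  ∀ f : BoundedContinuousFunction SState ℝ,
    ContinuousOn (fun t => ∫ u, f u ∂(ν t)) (Set.Ici (0 : ℝ))

/-- The weak-form mean-field equation for the test function `φ` with derivative family `D`. -/
def WeakEq (C d : ℕ) (lam : ℝ) (β : ℝ≥0 → ℝ) (ν : ℝ → Measure SState)
    (φ : SState → ℝ) (D : (n : ℕ) → Fin n → (Fin n → ℝ≥0) → ℝ) : Prop :=
  ∀ t ≥ (0 : ℝ),
    pair (ν t) φ = pair (ν 0) φ + (∫ s in (0 : ℝ)..t, pair (ν s) (sumDeriv D))
      + ∫ s in (0 : ℝ)..t, drift C d lam β φ (ν s)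

/-- The mild-form mean-field equation for the test function `φ`. -/
def MildEq (C d : ℕ) (lam : ℝ) (β : ℝ≥0 → ℝ) (ν : ℝ → Measure SState)
    (φ : SState → ℝ) : Prop :=
  ∀ t ≥ (0 : ℝ),
    pair (ν t) φ = pair (ν 0) (fun u => φ (shift t u))
      + ∫ s in (0 : ℝ)..t, drift C d lam β (fun u => φ (shift (t - s) u)) (ν s)

/-- A mean-field model solution: a weakly continuous path of probability measures on `𝒰`
solving the weak-form equation for every `C_b^1` test function. -/
def IsMFSolution (C d : ℕ) (lam : ℝ) (β : ℝ≥0 → ℝ) (ν : ℝ → Measure SState) : Prop :=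
  (∀ t ≥ (0 : ℝ), MemM1 C (ν t)) ∧ WeaklyContinuous ν ∧
  ∀ (φ : SState → ℝ) (D : (n : ℕ) → Fin n → (Fin n → ℝ≥0) → ℝ),
    IsCb1 φ D → WeakEq C d lam β ν φ D

/-- A mild solution: weakly continuous path of probability measures on `𝒰` solving
the mild-form equation for every `C_b` test function. -/
def IsMildSolution (C d : ℕ) (lam : ℝ) (β : ℝ≥0 → ℝ) (ν : ℝ → Measure SState) : Prop :=
  (∀ t ≥ (0 : ℝ), MemM1 C (ν t)) ∧ WeaklyContinuous ν ∧
  ∀ φ : SState → ℝ, IsCb φ → MildEq C d lam β ν φ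

/-- The total-variation style norm `‖ν¹ − ν²‖ = sup_{‖φ‖_∞ ≤ 1, φ ∈ C_b} |⟨ν¹,φ⟩ − ⟨ν²,φ⟩|`. -/
def measDist (μ₁ μ₂ : Measure SState) : ℝ :=
  ⨆ φ : {φ : BoundedContinuousFunction SState ℝ // ‖φ‖ ≤ 1},
    |(∫ u, φ.1 u ∂μ₁) - ∫ u, φ.1 u ∂μ₂|

end MFModel
end

namespace MFModel

/-- The arrival part of the drift integrand:
`ψ_ν(n,x₁,…,x_n) = (Φ_n(ν)/(n+1)) Σ_{j=1}^{n+1} (φ(n+1,x₁,…,x_{j−1},0,x_j,…,x_n) − φ(n,x))`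
for `0 ≤ n ≤ C−1`, and `ψ_ν ≡ 0` on `𝒰_C` (and beyond). -/
noncomputable def psiArr (C d : ℕ) (φ : SState → ℝ) (ν : Measure SState) (u : SState) : ℝ :=
  if u.1 < C then
    (Phi C d ν u.1 / (u.1 + 1)) *
      ∑ j : Fin (u.1 + 1), (φ ⟨u.1 + 1, j.insertNth 0 u.2⟩ - φ u)
  else 0

/-- A set of `SState` is measurable iff fiberwise preimages are (here: levels). -/
private lemma measurableSet_level' (m : ℕ) : MeasurableSet (level m) := by
  refine MeasurableSpace.measurableSet_iInf.2 fun a => ?_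
  show MeasurableSet (Sigma.mk a ⁻¹' (level m))
  by_cases h : a = m
  · convert MeasurableSet.univ
    ext x; simp [level, h]
  · convert MeasurableSet.empty
    ext x; simp [level, h]

private lemma measurable_of_sigma' {f : SState → ℝ}
    (h : ∀ n, Measurable fun x : Fin n → ℝ≥0 => f ⟨n, x⟩) : Measurable f := by
  intro s hs
  refine MeasurableSpace.measurableSet_iInf.2 fun a => ?_
  show MeasurableSet (Sigma.mk a ⁻¹' (f ⁻¹' s))
  exact h a hs

private lemma measurable_of_continuous' {f : SState → ℝ} (h : Continuous f) : Measurable f :=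
  measurable_of_sigma' fun n => ((h.comp continuous_sigmaMk).measurable)

/-- The indicator of level `m` as a bounded continuous function. -/
private noncomputable def indBCF (m : ℕ) : BoundedContinuousFunction SState ℝ :=
  BoundedContinuousFunction.ofNormedAddCommGroup
    (fun u : SState => if u.1 = m then (1 : ℝ) else 0)
    (by
      apply continuous_sigma
      intro i
      by_cases h : i = m <;> simp only [h, if_true, if_false] <;> exact continuous_const)
    1
    (by
      intro u
      by_cases h : u.1 = m <;> simp [h])

private lemma indBCF_apply (m : ℕ) (u : SState) :
    indBCF m u = if u.1 = m then (1 : ℝ) else 0 := rfl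

private lemma integral_indBCF (m : ℕ) (μ : Measure SState) [IsFiniteMeasure μ] :
    ∫ u, indBCF m u ∂μ = (μ (level m)).toReal := by
  have hcoe : (fun u => indBCF m u) = Set.indicator (level m) (1 : SState → ℝ) := by
    funext u
    by_cases h : u.1 = m
    · rw [indBCF_apply, if_pos h, Set.indicator_of_mem (by exact h) , Pi.one_apply]
    · rw [indBCF_apply, if_neg h, Set.indicator_of_notMem (by exact h)]
  rw [hcoe]
  exact integral_indicator_one (measurableSet_level' m)

/-- The level-independent arrival integrand. -/
private noncomputable def gArr (φ : SState → ℝ) (u : SState) : ℝ :=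
  ((u.1 : ℝ) + 1)⁻¹ * ∑ j : Fin (u.1 + 1), (φ ⟨u.1 + 1, j.insertNth 0 u.2⟩ - φ u)

private lemma psiArr_eq_sum (C d : ℕ) (φ : SState → ℝ) (ν : Measure SState) (u : SState) :
    psiArr C d φ ν u
      = ∑ n ∈ Finset.range C, Phi C d ν n * (if u.1 = n then gArr φ u else 0) := by
  unfold psiArr gArr
  by_cases h : u.1 < C
  · rw [if_pos h, Finset.sum_eq_single u.1]
    · rw [if_pos rfl, div_eq_mul_inv]
      ring
    · intro n _ hne
      rw [if_neg (fun hh => hne hh.symm), mul_zero]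
    · intro hnot
      exact absurd (Finset.mem_range.2 h) hnot
  · rw [if_neg h]
    refine (Finset.sum_eq_zero fun n hn => ?_).symm
    rw [if_neg (fun hh : u.1 = n => h (by rw [hh]; exact Finset.mem_range.1 hn)), mul_zero]

private lemma exists_hBCF (φ : SState → ℝ) (hφ : IsCb φ) (n : ℕ) :
    ∃ H : BoundedContinuousFunction SState ℝ,
      ∀ u : SState, H u = if u.1 = n then gArr φ u else 0 := by
  obtain ⟨hcont, M, hM⟩ := hφ
  have hM0 : 0 ≤ M := le_trans (abs_nonneg _) (hM emptyState)
  have hg : ∀ u : SState, |gArr φ u| ≤ 2 * M := by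
    intro u
    have hb : |∑ j : Fin (u.1 + 1), (φ ⟨u.1 + 1, j.insertNth 0 u.2⟩ - φ u)|
        ≤ (u.1 + 1 : ℝ) * (2 * M) := by
      calc |∑ j : Fin (u.1 + 1), (φ ⟨u.1 + 1, j.insertNth 0 u.2⟩ - φ u)|
          ≤ ∑ j : Fin (u.1 + 1), |φ ⟨u.1 + 1, j.insertNth 0 u.2⟩ - φ u| :=
            Finset.abs_sum_le_sum_abs _ _
        _ ≤ ∑ _j : Fin (u.1 + 1), (2 * M) := by
            refine Finset.sum_le_sum fun j _ => ?_
            calc |φ ⟨u.1 + 1, j.insertNth 0 u.2⟩ - φ u|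
                ≤ |φ ⟨u.1 + 1, j.insertNth 0 u.2⟩| + |φ u| := abs_sub _ _
              _ ≤ M + M := add_le_add (hM _) (hM _)
              _ = 2 * M := by ring
        _ = (u.1 + 1 : ℝ) * (2 * M) := by
            rw [Finset.sum_const, Finset.card_univ, Fintype.card_fin]
            push_cast; ring
    have hpos : (0 : ℝ) < (u.1 : ℝ) + 1 := by positivity
    calc |gArr φ u| = ((u.1 : ℝ) + 1)⁻¹ * |∑ j : Fin (u.1 + 1),
            (φ ⟨u.1 + 1, j.insertNth 0 u.2⟩ - φ u)| := by
          rw [gArr, abs_mul, abs_of_nonneg (by positivity)]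
      _ ≤ ((u.1 : ℝ) + 1)⁻¹ * ((u.1 + 1 : ℝ) * (2 * M)) := by
          exact mul_le_mul_of_nonneg_left hb (by positivity)
      _ = 2 * M := by field_simp
  refine ⟨BoundedContinuousFunction.ofNormedAddCommGroup
      (fun u : SState => if u.1 = n then gArr φ u else 0)
      ?_ (2 * M) ?_, fun u => rfl⟩
  · apply continuous_sigma
    intro i
    by_cases h : i = n
    · subst h
      have heq : (fun a : Fin i → ℝ≥0 =>
          if (⟨i, a⟩ : SState).1 = i then gArr φ (⟨i, a⟩ : SState) else 0)
            = fun a : Fin i → ℝ≥0 => gArr φ (⟨i, a⟩ : SState) := by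
        funext a; rw [if_pos rfl]
      rw [heq]
      show Continuous fun x : Fin i → ℝ≥0 =>
        ((i : ℝ) + 1)⁻¹ * ∑ j : Fin (i + 1), (φ ⟨i + 1, j.insertNth 0 x⟩ - φ ⟨i, x⟩)
      refine continuous_const.mul (continuous_finset_sum _ fun j _ => Continuous.sub ?_ ?_)
      · exact hcont.comp (continuous_sigmaMk.comp
          ((continuous_const.finInsertNth j continuous_id)))
      · exact hcont.comp continuous_sigmaMk
    · simp only [h, if_false]
      exact continuous_const
  · intro u
    show ‖if u.1 = n then gArr φ u else 0‖ ≤ 2 * M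
    by_cases h : u.1 = n
    · rw [if_pos h, Real.norm_eq_abs]; exact hg u
    · rw [if_neg h, norm_zero]; positivity

/-- **Continuity of the nonlinear arrival term along a weakly continuous path.**
If `φ ∈ C_b(𝒰)` and `t ↦ ν_t ∈ M_1(𝒰)` is continuous for the weak topology, then
`t ↦ ⟨ν_t, ψ_{ν_t}⟩` is continuous on `[0,∞)`. -/
theorem arrival_term_continuous
    (C d : ℕ) (hC : 1 ≤ C) (hd : 1 ≤ d)
    (φ : SState → ℝ) (hφ : IsCb φ)
    (ν : ℝ → Measure SState) (hν : ∀ t ≥ (0 : ℝ), MemM1 C (ν t))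
    (hw : WeaklyContinuous ν) :
    ContinuousOn (fun t => ∫ u, psiArr C d φ (ν t) u ∂(ν t)) (Set.Ici (0 : ℝ)) := by
  choose H hH using fun n => exists_hBCF φ hφ n
  have HInt : ∀ (n : ℕ) (μ : Measure SState), IsFiniteMeasure μ →
      Integrable (fun u => H n u) μ := by
    intro n μ hm
    haveI := hm
    exact (integrable_const ‖H n‖).mono'
      ((measurable_of_continuous' (H n).continuous).aestronglyMeasurable)
      (Filter.Eventually.of_forall fun u => (H n).norm_coe_le_norm u)
  have hPt : ∀ t ∈ Set.Ici (0 : ℝ),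
      (∫ u, psiArr C d φ (ν t) u ∂(ν t))
        = ∑ n ∈ Finset.range C, Phi C d (ν t) n * ∫ u, H n u ∂(ν t) := by
    intro t ht
    haveI := (hν t ht).1
    have h1 : (fun u => psiArr C d φ (ν t) u)
        = fun u => ∑ n ∈ Finset.range C, Phi C d (ν t) n * H n u := by
      funext u
      rw [psiArr_eq_sum]
      exact Finset.sum_congr rfl fun n _ => by rw [hH n u]
    rw [h1, integral_finset_sum _ (fun n _ => (HInt n (ν t) inferInstance).const_mul _)]
    exact Finset.sum_congr rfl fun n _ => integral_const_mul _ _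
  have hRcont : ∀ m : ℕ, ContinuousOn (fun t => ((ν t) (level m)).toReal) (Set.Ici (0 : ℝ)) := by
    intro m
    refine (hw (indBCF m)).congr fun t ht => ?_
    haveI := (hν t ht).1
    exact (integral_indBCF m (ν t)).symm
  have hRbarcont : ∀ n : ℕ, ContinuousOn (fun t => Rbar C (ν t) n) (Set.Ici (0 : ℝ)) := by
    intro n
    exact continuousOn_finset_sum _ fun m _ => hRcont m
  have hPhicont : ∀ n : ℕ, ContinuousOn (fun t => Phi C d (ν t) n) (Set.Ici (0 : ℝ)) := by
    intro n
    exact continuousOn_finset_sum _ fun k _ =>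
      ((hRbarcont n).pow k).mul ((hRbarcont (n + 1)).pow _)
  refine ContinuousOn.congr ?_ hPt
  exact continuousOn_finset_sum _ fun n _ => (hPhicont n).mul (hw (H n))


end MFModel
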